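/- Let k be an algebraically closed field of characteristic 2 and let f = w^2 + z^3 + x*y^5 + y*z*w ∈ k[x,y,z,w]. Then f ∉ (x^2, y^2, z^2, w^2), so by Fedder's criterion the degree-one Du Val del Pezzo surface {w^2 + z^3 + x y^5 + y z w = 0} in P(1,1,2,3) (of type E_8^4 in characteristic 2) is Frobenius split. -/

import Mathlib

open MvPolynomial

/-- A ring `R` of characteristic `p` is Frobenius split if the Frobenius `R → R, r ↦ rᵖ`
admits a splitting, i.e. an additive map `σ : R → R` with `σ 1 = 1` and
`σ (aᵖ · b) = a · σ b`.  For the anti-canonical section ring of a Du Val del Pezzo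
surface this is equivalent to (global) Frobenius splitting of the surface. -/
def IsFrobeniusSplitRing (p : ℕ) (R : Type*) [CommRing R] : Prop :=
  ∃ σ : R →+ R, σ 1 = 1 ∧ ∀ a b : R, σ (a ^ p * b) = a * σ b

namespace FedderAux

/-- parity pattern of the monomial `y z w` -/
def okm (m : Fin 4 →₀ ℕ) : Prop :=
  m 0 % 2 = 0 ∧ m 1 % 2 = 1 ∧ m 2 % 2 = 1 ∧ m 3 % 2 = 1

instance : DecidablePred okm := fun m => by unfold okm; infer_instance

noncomputable def halfm (m : Fin 4 →₀ ℕ) : Fin 4 →₀ ℕ :=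
  Finsupp.equivFunOnFinite.symm (fun i => m i / 2)

@[simp] lemma halfm_apply (m : Fin 4 →₀ ℕ) (i : Fin 4) : halfm m i = m i / 2 := rfl

variable (k : Type*) [Field k] [IsAlgClosed k] [CharP k 2]

noncomputable def sq : k →+ k :=
  ((frobeniusEquiv k 2).symm : k →+* k).toAddMonoidHom

@[simp] lemma sq_square (c : k) : sq k (c ^ 2) = c :=
  frobeniusEquiv_symm_apply_frobenius k 2 c

@[simp] lemma sq_one : sq k 1 = 1 := map_one ((frobeniusEquiv k 2).symm : k →+* k)

lemma sq_mul (c d : k) : sq k (c * d) = sq k c * sq k d :=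
  map_mul ((frobeniusEquiv k 2).symm : k →+* k) c d

/-- The Fedder projection: the `S²`-linear projection of `S = k[x,y,z,w]` onto the
free summand generated by the monomial `y·z·w`, composed with the inverse Frobenius. -/
noncomputable def piF : MvPolynomial (Fin 4) k →+ MvPolynomial (Fin 4) k :=
  Finsupp.liftAddHom (fun m =>
    if okm m then ((monomial (halfm m)).toAddMonoidHom.comp (sq k)) else 0)
    |>.comp AddMonoidAlgebra.coeffAddEquiv.toAddMonoidHom

lemma piF_monomial (m : Fin 4 →₀ ℕ) (c : k) :
    piF k (monomial m c) = if okm m then monomial (halfm m) (sq k c) else 0 := by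
  have : piF k (AddMonoidAlgebra.ofCoeff (Finsupp.single m c))
      = (if okm m then ((monomial (halfm m)).toAddMonoidHom.comp (sq k)) else 0) c :=
    Finsupp.liftAddHom_apply_single _ m c
  rw [show (monomial m c : MvPolynomial (Fin 4) k) = AddMonoidAlgebra.ofCoeff (Finsupp.single m c) from rfl, this]
  split_ifs <;> simp

lemma piF_sq_mul (s h : MvPolynomial (Fin 4) k) : piF k (s ^ 2 * h) = s * piF k h := by
  haveI : Fact (Nat.Prime 2) := ⟨Nat.prime_two⟩
  induction h using MvPolynomial.induction_on' with
  | add p q hp hq => rw [mul_add, map_add, hp, hq, map_add, mul_add]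
  | monomial b d =>
    induction s using MvPolynomial.induction_on' with
    | add p q hp hq =>
      rw [add_pow_char, add_mul, map_add, hp, hq, add_mul]
    | monomial n c =>
      rw [monomial_pow, monomial_mul, piF_monomial, piF_monomial]
      have hok : okm (2 • n + b) ↔ okm b := by
        unfold okm
        simp only [Finsupp.add_apply, Finsupp.smul_apply, smul_eq_mul]
        constructor <;> (rintro ⟨h0, h1, h2, h3⟩; refine ⟨?_, ?_, ?_, ?_⟩ <;> omega)
      by_cases hb : okm b
      · rw [if_pos (hok.mpr hb), if_pos hb]
        have hhalf : halfm (2 • n + b) = n + halfm b := by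
          ext i
          simp only [halfm_apply, Finsupp.add_apply, Finsupp.smul_apply, smul_eq_mul]
          omega
        rw [hhalf, monomial_mul]
        congr 1
        rw [sq_mul, sq_square]
      · rw [if_neg (fun hh => hb (hok.mp hh)), if_neg hb, mul_zero]

/-- The polynomial `f = w² + z³ + x·y⁵ + y·z·w`. -/
noncomputable abbrev fE8 : MvPolynomial (Fin 4) k :=
  X 3 ^ 2 + X 2 ^ 3 + X 0 * X 1 ^ 5 + X 1 * X 2 * X 3

lemma piF_fE8 : piF k (fE8 k) = 1 := by
  have h1 : (X 3 ^ 2 : MvPolynomial (Fin 4) k) = monomial (Finsupp.single 3 2) 1 :=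
    X_pow_eq_monomial
  have h2 : (X 2 ^ 3 : MvPolynomial (Fin 4) k) = monomial (Finsupp.single 2 3) 1 :=
    X_pow_eq_monomial
  have h3 : (X 0 * X 1 ^ 5 : MvPolynomial (Fin 4) k)
      = monomial (Finsupp.single 0 1 + Finsupp.single 1 5) 1 := by
    rw [X_pow_eq_monomial, X, monomial_mul, one_mul]
  have h4 : (X 1 * X 2 * X 3 : MvPolynomial (Fin 4) k)
      = monomial (Finsupp.single 1 1 + Finsupp.single 2 1 + Finsupp.single 3 1) 1 := by
    rw [X, X, X, monomial_mul, monomial_mul]; norm_num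
  rw [show fE8 k = X 3 ^ 2 + X 2 ^ 3 + X 0 * X 1 ^ 5 + X 1 * X 2 * X 3 from rfl,
    h1, h2, h3, h4, map_add, map_add, map_add,
    piF_monomial, piF_monomial, piF_monomial, piF_monomial]
  rw [if_neg, if_neg, if_neg, if_pos]
  · have hh : halfm (Finsupp.single 1 1 + Finsupp.single 2 1 + Finsupp.single 3 1)
        = (0 : Fin 4 →₀ ℕ) := by
      ext i
      fin_cases i <;> simp [Finsupp.single_apply]
    rw [hh, sq_one]
    simp
  · constructor
    · simp [Finsupp.single_apply]
    · refine ⟨?_, ?_, ?_⟩ <;> simp [Finsupp.single_apply]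
  · simp [okm, Finsupp.single_apply]
  · simp [okm, Finsupp.single_apply]
  · simp [okm, Finsupp.single_apply]

end FedderAux

open FedderAux in
/-- Let `k` be algebraically closed of characteristic 2 and
`f = w² + z³ + x·y⁵ + y·z·w ∈ k[x,y,z,w]`.  Then `f ∉ (x², y², z², w²)`, so by Fedder's
criterion the degree-one Du Val del Pezzo surface `{w² + z³ + x·y⁵ + y·z·w = 0}` in
`ℙ(1,1,2,3)` (of type `E₈⁴` in characteristic 2) is Frobenius split. -/
theorem fedder_E8_4_char2 (k : Type*) [Field k] [IsAlgClosed k] [CharP k 2] :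
    (X 3 ^ 2 + X 2 ^ 3 + X 0 * X 1 ^ 5 + X 1 * X 2 * X 3 : MvPolynomial (Fin 4) k) ∉
      Ideal.span {(X 0 : MvPolynomial (Fin 4) k) ^ 2, X 1 ^ 2, X 2 ^ 2, X 3 ^ 2} ∧
    IsFrobeniusSplitRing 2
      (MvPolynomial (Fin 4) k ⧸
        Ideal.span
          {(X 3 ^ 2 + X 2 ^ 3 + X 0 * X 1 ^ 5 + X 1 * X 2 * X 3 :
              MvPolynomial (Fin 4) k)}) := by
  constructor
  · -- `f ∉ (x², y², z², w²)`
    intro h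
    rw [show ({(X 0 : MvPolynomial (Fin 4) k) ^ 2, X 1 ^ 2, X 2 ^ 2, X 3 ^ 2} :
        Set (MvPolynomial (Fin 4) k))
        = insert (X 0 ^ 2) (insert (X 1 ^ 2) (insert (X 2 ^ 2) {X 3 ^ 2})) from rfl,
      Ideal.mem_span_insert] at h
    obtain ⟨a, z1, hz1, hfeq⟩ := h
    rw [Ideal.mem_span_insert] at hz1
    obtain ⟨b, z2, hz2, rfl⟩ := hz1
    rw [Ideal.mem_span_insert] at hz2
    obtain ⟨c, z3, hz3, rfl⟩ := hz2
    obtain ⟨t, rfl⟩ := Ideal.mem_span_singleton.mp hz3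
    have hpi := congrArg (piF k) hfeq
    rw [piF_fE8, mul_comm a, mul_comm b, mul_comm c,
      map_add, map_add, map_add, piF_sq_mul, piF_sq_mul, piF_sq_mul, piF_sq_mul] at hpi
    have hc := congrArg constantCoeff hpi
    simp [map_add, map_mul, constantCoeff_X] at hc
  · -- Frobenius splitting of the quotient ring
    set I : Ideal (MvPolynomial (Fin 4) k) := Ideal.span {fE8 k} with hI
    -- the splitting on the quotient
    have wd : ∀ g g' : MvPolynomial (Fin 4) k,
        @Setoid.r _ (Submodule.quotientRel I) g g' →
        Ideal.Quotient.mk I (piF k (fE8 k * g)) = Ideal.Quotient.mk I (piF k (fE8 k * g')) := by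
      intro g g' hgg
      have hmem : g - g' ∈ I := (Submodule.quotientRel_def I).mp hgg
      obtain ⟨t, ht⟩ := Ideal.mem_span_singleton.mp (hI ▸ hmem)
      rw [Ideal.Quotient.mk_eq_mk_iff_sub_mem, ← map_sub, ← mul_sub, ht,
        show fE8 k * (fE8 k * t) = fE8 k ^ 2 * t by ring, piF_sq_mul]
      exact Ideal.mul_mem_right _ _ (Ideal.subset_span rfl)
    let sb : (MvPolynomial (Fin 4) k ⧸ I) → (MvPolynomial (Fin 4) k ⧸ I) :=
      fun r => Quotient.liftOn' r (fun g => Ideal.Quotient.mk I (piF k (fE8 k * g))) wd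
    have sb_mk : ∀ g : MvPolynomial (Fin 4) k,
        sb (Ideal.Quotient.mk I g) = Ideal.Quotient.mk I (piF k (fE8 k * g)) :=
      fun g => rfl
    have hadd : ∀ x y : MvPolynomial (Fin 4) k ⧸ I, sb (x + y) = sb x + sb y := by
      intro x y
      obtain ⟨g, rfl⟩ := Ideal.Quotient.mk_surjective x
      obtain ⟨h, rfl⟩ := Ideal.Quotient.mk_surjective y
      rw [← (Ideal.Quotient.mk I).map_add, sb_mk, sb_mk, sb_mk, mul_add, map_add,
        (Ideal.Quotient.mk I).map_add]
    refine ⟨AddMonoidHom.mk' sb hadd, ?_, ?_⟩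
    · show sb 1 = 1
      rw [show (1 : MvPolynomial (Fin 4) k ⧸ I) = Ideal.Quotient.mk I 1 from rfl, sb_mk,
        mul_one, piF_fE8, (Ideal.Quotient.mk I).map_one]
    · intro a b
      obtain ⟨x, rfl⟩ := Ideal.Quotient.mk_surjective a
      obtain ⟨y, rfl⟩ := Ideal.Quotient.mk_surjective b
      show sb (Ideal.Quotient.mk I x ^ 2 * Ideal.Quotient.mk I y)
          = Ideal.Quotient.mk I x * sb (Ideal.Quotient.mk I y)
      rw [← (Ideal.Quotient.mk I).map_pow, ← (Ideal.Quotient.mk I).map_mul, sb_mk, sb_mk,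
        show fE8 k * (x ^ 2 * y) = x ^ 2 * (fE8 k * y) by ring, piF_sq_mul, (Ideal.Quotient.mk I).map_mul]
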